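/- arXiv:1302.6647 — 3 statements merged into one kernel-verified Lean document; each statement's English description precedes it below -/
import Mathlib

section
/- Let S be a measurable space, π a probability measure on S, α a Markov kernel on S, q measurable with 0 < K_1 ≤ q ≤ K_2, satisfying detailed balance q(x)α(x,dy)π(dx) = q(y)α(y,dx)π(dy). Then the map η ↦ I(η) := ∫ q dη - ∫∫ (dη/dπ)^{1/2}(x)(dη/dπ)^{1/2}(y) q(x) α(x,dy) π(dx), defined on probability measures η ≪ π, is convex: for η_0, η_1 ≪ π and t ∈ [0,1], I(t η_0 + (1-t) η_1) ≤ t I(η_0) + (1-t) I(η_1). -/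
open MeasureTheory ProbabilityTheory

lemma sqrtCS {a₀ a₁ b₀ b₁ t : ℝ} (ha₀ : 0 ≤ a₀) (ha₁ : 0 ≤ a₁) (hb₀ : 0 ≤ b₀)
    (hb₁ : 0 ≤ b₁) (ht0 : 0 ≤ t) (ht1 : t ≤ 1) :
    t * (Real.sqrt a₀ * Real.sqrt b₀) + (1 - t) * (Real.sqrt a₁ * Real.sqrt b₁)
      ≤ Real.sqrt (t * a₀ + (1 - t) * a₁) * Real.sqrt (t * b₀ + (1 - t) * b₁) := by
  have h1t : 0 ≤ 1 - t := by linarith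
  have hs0 := Real.sqrt_nonneg a₀
  have hs1 := Real.sqrt_nonneg a₁
  have hu0 := Real.sqrt_nonneg b₀
  have hu1 := Real.sqrt_nonneg b₁
  have hA : 0 ≤ t * a₀ + (1 - t) * a₁ := by positivity
  have hL : 0 ≤ t * (Real.sqrt a₀ * Real.sqrt b₀) + (1 - t) * (Real.sqrt a₁ * Real.sqrt b₁) := by
    positivity
  have aux : ∀ s0 s1 u0 u1 : ℝ, (t * (s0 * u0) + (1 - t) * (s1 * u1)) ^ 2
      ≤ (t * s0 ^ 2 + (1 - t) * s1 ^ 2) * (t * u0 ^ 2 + (1 - t) * u1 ^ 2) := by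
    intro s0 s1 u0 u1
    nlinarith [mul_nonneg (mul_nonneg ht0 h1t) (sq_nonneg (s0 * u1 - s1 * u0))]
  have hsq : (t * (Real.sqrt a₀ * Real.sqrt b₀) + (1 - t) * (Real.sqrt a₁ * Real.sqrt b₁)) ^ 2
      ≤ (t * a₀ + (1 - t) * a₁) * (t * b₀ + (1 - t) * b₁) := by
    have := aux (Real.sqrt a₀) (Real.sqrt a₁) (Real.sqrt b₀) (Real.sqrt b₁)
    rwa [Real.sq_sqrt ha₀, Real.sq_sqrt ha₁, Real.sq_sqrt hb₀, Real.sq_sqrt hb₁] at this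
  have h := Real.sqrt_le_sqrt hsq
  rwa [Real.sqrt_sq hL, Real.sqrt_mul hA] at h

lemma sqrt_integrable {S : Type*} [MeasurableSpace S] (ν : Measure S) [IsProbabilityMeasure ν]
    (θ : S → ℝ) (hm : Measurable θ) (hn : ∀ y, 0 ≤ θ y)
    (hx : ∫⁻ y, ENNReal.ofReal (θ y) ∂ν < ⊤) :
    Integrable (fun y => Real.sqrt (θ y)) ν := by
  refine ⟨(Real.continuous_sqrt.measurable.comp hm).aestronglyMeasurable, ?_⟩
  rw [hasFiniteIntegral_iff_ofReal (ae_of_all _ fun y => Real.sqrt_nonneg _)]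
  calc ∫⁻ y, ENNReal.ofReal (Real.sqrt (θ y)) ∂ν
      ≤ ∫⁻ y, (1 + ENNReal.ofReal (θ y)) ∂ν := by
        refine lintegral_mono fun y => ?_
        calc ENNReal.ofReal (Real.sqrt (θ y)) ≤ ENNReal.ofReal (1 + θ y) :=
              ENNReal.ofReal_le_ofReal
                (by nlinarith [Real.sq_sqrt (hn y), Real.sqrt_nonneg (θ y)])
          _ = 1 + ENNReal.ofReal (θ y) := by
              rw [ENNReal.ofReal_add zero_le_one (hn y), ENNReal.ofReal_one]
    _ = 1 + ∫⁻ y, ENNReal.ofReal (θ y) ∂ν := by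
        rw [lintegral_add_left measurable_const]; simp
    _ < ⊤ := by
        rw [ENNReal.add_lt_top]; exact ⟨ENNReal.one_lt_top, hx⟩

lemma key_fin {S : Type*} [MeasurableSpace S] (π : Measure S) [IsProbabilityMeasure π]
    (α : Kernel S S) [IsMarkovKernel α]
    (q : S → ℝ) (hq : Measurable q) (K₁ K₂ : ℝ) (hK₁ : 0 < K₁)
    (hqb : ∀ x, K₁ ≤ q x ∧ q x ≤ K₂)
    (hdb : ((π.withDensity fun x => ENNReal.ofReal (q x)) ⊗ₘ α).map Prod.swap
        = (π.withDensity fun x => ENNReal.ofReal (q x)) ⊗ₘ α)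
    (θ : S → ℝ) (hm : Measurable θ)
    (hfin : (∫⁻ x, ENNReal.ofReal (θ x) ∂π) ≠ ⊤) :
    ∫⁻ x, ∫⁻ y, ENNReal.ofReal (θ y) ∂(α x) ∂π ≠ ⊤ := by
  set μ := π.withDensity (fun x => ENNReal.ofReal (q x)) with hμ
  have hqE : Measurable fun x => ENNReal.ofReal (q x) := hq.ennreal_ofReal
  have hμfin : IsFiniteMeasure μ := by
    apply isFiniteMeasure_withDensity
    have h : ∫⁻ x, ENNReal.ofReal (q x) ∂π ≤ ∫⁻ _, ENNReal.ofReal K₂ ∂π :=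
      lintegral_mono fun x => ENNReal.ofReal_le_ofReal (hqb x).2
    simp only [lintegral_const, measure_univ, mul_one] at h
    exact (h.trans_lt ENNReal.ofReal_lt_top).ne
  have hmE : Measurable fun x => ENNReal.ofReal (θ x) := hm.ennreal_ofReal
  have hmE1 : Measurable fun p : S × S => ENNReal.ofReal (θ p.1) := hmE.comp measurable_fst
  have hmE2 : Measurable fun p : S × S => ENNReal.ofReal (θ p.2) := hmE.comp measurable_snd
  have h1 : ∫⁻ p : S × S, ENNReal.ofReal (θ p.2) ∂(μ ⊗ₘ α)
      = ∫⁻ p : S × S, ENNReal.ofReal (θ p.1) ∂(μ ⊗ₘ α) := by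
    conv_lhs => rw [← hdb]
    rw [lintegral_map hmE2 measurable_swap]
    rfl
  have h2 : ∫⁻ p : S × S, ENNReal.ofReal (θ p.1) ∂(μ ⊗ₘ α) = ∫⁻ x, ENNReal.ofReal (θ x) ∂μ := by
    rw [Measure.lintegral_compProd hmE1]
    simp [measure_univ]
  have h3 : ∫⁻ x, ENNReal.ofReal (θ x) ∂μ ≠ ⊤ := by
    rw [hμ, lintegral_withDensity_eq_lintegral_mul _ hqE hmE]
    have h : ∫⁻ x, (ENNReal.ofReal (q x) * ENNReal.ofReal (θ x)) ∂π
        ≤ ENNReal.ofReal K₂ * ∫⁻ x, ENNReal.ofReal (θ x) ∂π := by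
      rw [← lintegral_const_mul _ hmE]
      exact lintegral_mono fun x => mul_le_mul_left (ENNReal.ofReal_le_ofReal (hqb x).2) _
    exact (h.trans_lt (ENNReal.mul_lt_top ENNReal.ofReal_lt_top hfin.lt_top)).ne
  have h4 : ∫⁻ x, ∫⁻ y, ENNReal.ofReal (θ y) ∂α x ∂μ ≠ ⊤ := by
    rw [← Measure.lintegral_compProd hmE2, h1, h2]; exact h3
  have h5 : ENNReal.ofReal K₁ * ∫⁻ x, ∫⁻ y, ENNReal.ofReal (θ y) ∂α x ∂π
      ≤ ∫⁻ x, ∫⁻ y, ENNReal.ofReal (θ y) ∂α x ∂μ := by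
    rw [hμ, lintegral_withDensity_eq_lintegral_mul _ hqE hmE.lintegral_kernel,
      ← lintegral_const_mul _ hmE.lintegral_kernel]
    exact lintegral_mono fun x => mul_le_mul_left (ENNReal.ofReal_le_ofReal (hqb x).1) _
  intro h
  rw [h, ENNReal.mul_top (by simp [ENNReal.ofReal_eq_zero, not_le, hK₁])] at h5
  exact h4 (top_le_iff.mp h5)

/-- Integrability of the function `x ↦ q x √θ(x) ∫ √θ(y) α(x,dy)` with respect to `π`. -/
lemma F_integrable {S : Type*} [MeasurableSpace S] (π : Measure S) [IsProbabilityMeasure π]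
    (α : Kernel S S) [IsMarkovKernel α]
    (q : S → ℝ) (hq : Measurable q) (K₂ : ℝ) (hq0 : ∀ x, 0 ≤ q x) (hq2 : ∀ x, q x ≤ K₂)
    (θ : S → ℝ) (hm : Measurable θ) (hn : ∀ x, 0 ≤ θ x) (hint : Integrable θ π)
    (hfin : ∫⁻ x, ∫⁻ y, ENNReal.ofReal (θ y) ∂(α x) ∂π ≠ ⊤) :
    Integrable (fun x => q x * Real.sqrt (θ x) * ∫ y, Real.sqrt (θ y) ∂(α x)) π := by
  have haem : ∀ᵐ x ∂π, ∫⁻ y, ENNReal.ofReal (θ y) ∂α x < ⊤ :=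
    ae_lt_top hm.ennreal_ofReal.lintegral_kernel hfin
  have hsm : Measurable fun y => Real.sqrt (θ y) := Real.continuous_sqrt.measurable.comp hm
  have hg : StronglyMeasurable fun x => ∫ y, Real.sqrt (θ y) ∂α x :=
    StronglyMeasurable.integral_kernel_prod_right
      (f := fun _ y => Real.sqrt (θ y)) ((hsm.comp measurable_snd).stronglyMeasurable)
  have hG : StronglyMeasurable fun x => ∫ y, θ y ∂α x :=
    StronglyMeasurable.integral_kernel_prod_right
      (f := fun _ y => θ y) ((hm.comp measurable_snd).stronglyMeasurable)
  have hGint : Integrable (fun x => ∫ y, θ y ∂α x) π := by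
    refine ⟨hG.aestronglyMeasurable, ?_⟩
    rw [hasFiniteIntegral_iff_ofReal (ae_of_all _ fun x => integral_nonneg fun y => hn y)]
    calc ∫⁻ x, ENNReal.ofReal (∫ y, θ y ∂α x) ∂π
        ≤ ∫⁻ x, ∫⁻ y, ENNReal.ofReal (θ y) ∂α x ∂π := by
          refine lintegral_mono fun x => ?_
          calc ENNReal.ofReal (∫ y, θ y ∂α x) = (‖∫ y, θ y ∂α x‖₊ : ENNReal) :=
                (Real.enorm_eq_ofReal (integral_nonneg fun y => hn y)).symm
            _ ≤ ∫⁻ y, (‖θ y‖₊ : ENNReal) ∂α x := enorm_integral_le_lintegral_enorm _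
            _ = ∫⁻ y, ENNReal.ofReal (θ y) ∂α x :=
                lintegral_congr fun y => Real.enorm_eq_ofReal (hn y)
      _ < ⊤ := hfin.lt_top
  refine Integrable.mono' ((hint.add hGint).const_mul K₂)
    (((hq.mul hsm).aestronglyMeasurable.mul hg.aestronglyMeasurable)) ?_
  filter_upwards [haem] with x hx
  have hint2 : Integrable (fun y => Real.sqrt (θ y)) (α x) := sqrt_integrable (α x) θ hm hn hx
  have hint1 : Integrable θ (α x) :=
    ⟨hm.aestronglyMeasurable, (hasFiniteIntegral_iff_ofReal (ae_of_all _ hn)).mpr hx⟩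
  have hgnn : 0 ≤ ∫ y, Real.sqrt (θ y) ∂α x := integral_nonneg fun y => Real.sqrt_nonneg _
  have hsn := Real.sqrt_nonneg (θ x)
  have hq0x := hq0 x
  rw [Real.norm_eq_abs, abs_of_nonneg (by positivity)]
  have step : Real.sqrt (θ x) * ∫ y, Real.sqrt (θ y) ∂α x ≤ θ x + ∫ y, θ y ∂α x := by
    rw [← integral_const_mul]
    calc ∫ y, Real.sqrt (θ x) * Real.sqrt (θ y) ∂α x
        ≤ ∫ y, (θ x + θ y) ∂α x := by
          refine integral_mono (hint2.const_mul _) ((integrable_const _).add hint1) fun y => ?_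
          nlinarith [Real.sq_sqrt (hn x), Real.sq_sqrt (hn y),
            sq_nonneg (Real.sqrt (θ x) - Real.sqrt (θ y)),
            Real.sqrt_nonneg (θ x), Real.sqrt_nonneg (θ y)]
      _ = θ x + ∫ y, θ y ∂α x := by
          rw [integral_add (integrable_const _) hint1, integral_const, probReal_univ]
          simp
  calc q x * Real.sqrt (θ x) * ∫ y, Real.sqrt (θ y) ∂α x
      ≤ K₂ * (Real.sqrt (θ x) * ∫ y, Real.sqrt (θ y) ∂α x) := by
        rw [mul_assoc]
        exact mul_le_mul_of_nonneg_right (hq2 x) (by positivity)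
    _ ≤ K₂ * (θ x + ∫ y, θ y ∂α x) := by
        have hK₂ : 0 ≤ K₂ := (hq0 x).trans (hq2 x)
        exact mul_le_mul_of_nonneg_left step hK₂

/-- under detailed balance, the rate function
`I(η) = ∫ q dη - ∬ (dη/dπ)^{1/2}(x)(dη/dπ)^{1/2}(y) q(x) α(x,dy) π(dx)`,
expressed in terms of the densities `θ = dη/dπ` via
`J(θ) = ∫ q·θ dπ - ∫ q(x) √θ(x) (∫ √θ(y) α(x,dy)) π(dx)`,
is convex: `J(t θ₀ + (1-t) θ₁) ≤ t J(θ₀) + (1-t) J(θ₁)`. -/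
theorem stmt10 {S : Type*} [MeasurableSpace S] (π : Measure S) [IsProbabilityMeasure π]
    (α : Kernel S S) [IsMarkovKernel α]
    (q : S → ℝ) (hq : Measurable q) (K₁ K₂ : ℝ) (hK₁ : 0 < K₁)
    (hqb : ∀ x, K₁ ≤ q x ∧ q x ≤ K₂)
    (hdb : ((π.withDensity fun x => ENNReal.ofReal (q x)) ⊗ₘ α).map Prod.swap
        = (π.withDensity fun x => ENNReal.ofReal (q x)) ⊗ₘ α)
    (θ₀ θ₁ : S → ℝ) (h0m : Measurable θ₀) (h1m : Measurable θ₁)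
    (h00 : ∀ x, 0 ≤ θ₀ x) (h10 : ∀ x, 0 ≤ θ₁ x)
    (hp0 : IsProbabilityMeasure (π.withDensity fun x => ENNReal.ofReal (θ₀ x)))
    (hp1 : IsProbabilityMeasure (π.withDensity fun x => ENNReal.ofReal (θ₁ x)))
    (t : ℝ) (ht0 : 0 ≤ t) (ht1 : t ≤ 1)
    (J : (S → ℝ) → ℝ)
    (hJ : ∀ θ : S → ℝ, J θ = (∫ x, q x * θ x ∂π)
        - ∫ x, q x * Real.sqrt (θ x) * (∫ y, Real.sqrt (θ y) ∂(α x)) ∂π) :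
    J (fun x => t * θ₀ x + (1 - t) * θ₁ x) ≤ t * J θ₀ + (1 - t) * J θ₁ := by
  have h1t : 0 ≤ 1 - t := by linarith
  have hq0 : ∀ x, 0 ≤ q x := fun x => hK₁.le.trans (hqb x).1
  have hq2 : ∀ x, q x ≤ K₂ := fun x => (hqb x).2
  set θt : S → ℝ := fun x => t * θ₀ x + (1 - t) * θ₁ x with hθt
  have htm : Measurable θt := (h0m.const_mul t).add (h1m.const_mul (1 - t))
  have htn : ∀ x, 0 ≤ θt x := fun x =>
    add_nonneg (mul_nonneg ht0 (h00 x)) (mul_nonneg h1t (h10 x))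
  -- basic lintegral facts
  have hl0 : ∫⁻ x, ENNReal.ofReal (θ₀ x) ∂π = 1 := by
    have h := hp0.measure_univ
    rwa [withDensity_apply _ MeasurableSet.univ, setLIntegral_univ] at h
  have hl1 : ∫⁻ x, ENNReal.ofReal (θ₁ x) ∂π = 1 := by
    have h := hp1.measure_univ
    rwa [withDensity_apply _ MeasurableSet.univ, setLIntegral_univ] at h
  have hlt : ∫⁻ x, ENNReal.ofReal (θt x) ∂π ≤ 2 := by
    calc ∫⁻ x, ENNReal.ofReal (θt x) ∂π
        ≤ ∫⁻ x, (ENNReal.ofReal (θ₀ x) + ENNReal.ofReal (θ₁ x)) ∂π := by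
          refine lintegral_mono fun x => ?_
          calc ENNReal.ofReal (θt x) ≤ ENNReal.ofReal (θ₀ x + θ₁ x) :=
                ENNReal.ofReal_le_ofReal (by simp only [hθt]; nlinarith [h00 x, h10 x])
            _ = _ := ENNReal.ofReal_add (h00 x) (h10 x)
      _ = 2 := by
          rw [lintegral_add_left h0m.ennreal_ofReal, hl0, hl1]; norm_num
  -- integrability of the densities w.r.t. π
  have hint0 : Integrable θ₀ π :=
    ⟨h0m.aestronglyMeasurable, (hasFiniteIntegral_iff_ofReal (ae_of_all _ h00)).mpr
      (by rw [hl0]; exact ENNReal.one_lt_top)⟩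
  have hint1 : Integrable θ₁ π :=
    ⟨h1m.aestronglyMeasurable, (hasFiniteIntegral_iff_ofReal (ae_of_all _ h10)).mpr
      (by rw [hl1]; exact ENNReal.one_lt_top)⟩
  have hintt : Integrable θt π :=
    ⟨htm.aestronglyMeasurable, (hasFiniteIntegral_iff_ofReal (ae_of_all _ htn)).mpr
      (hlt.trans_lt (by norm_num))⟩
  -- finiteness of the double lintegrals, via detailed balance
  have H0 : ∫⁻ x, ∫⁻ y, ENNReal.ofReal (θ₀ y) ∂(α x) ∂π ≠ ⊤ :=
    key_fin π α q hq K₁ K₂ hK₁ hqb hdb θ₀ h0m (by rw [hl0]; exact ENNReal.one_ne_top)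
  have H1 : ∫⁻ x, ∫⁻ y, ENNReal.ofReal (θ₁ y) ∂(α x) ∂π ≠ ⊤ :=
    key_fin π α q hq K₁ K₂ hK₁ hqb hdb θ₁ h1m (by rw [hl1]; exact ENNReal.one_ne_top)
  have Ht : ∫⁻ x, ∫⁻ y, ENNReal.ofReal (θt y) ∂(α x) ∂π ≠ ⊤ :=
    key_fin π α q hq K₁ K₂ hK₁ hqb hdb θt htm (hlt.trans_lt (by norm_num)).ne
  -- a.e. finiteness of inner lintegrals
  have hae0 : ∀ᵐ x ∂π, ∫⁻ y, ENNReal.ofReal (θ₀ y) ∂α x < ⊤ :=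
    ae_lt_top h0m.ennreal_ofReal.lintegral_kernel H0
  have hae1 : ∀ᵐ x ∂π, ∫⁻ y, ENNReal.ofReal (θ₁ y) ∂α x < ⊤ :=
    ae_lt_top h1m.ennreal_ofReal.lintegral_kernel H1
  have haet : ∀ᵐ x ∂π, ∫⁻ y, ENNReal.ofReal (θt y) ∂α x < ⊤ :=
    ae_lt_top htm.ennreal_ofReal.lintegral_kernel Ht
  -- integrability of the three F functions
  have hF0 := F_integrable π α q hq K₂ hq0 hq2 θ₀ h0m h00 hint0 H0
  have hF1 := F_integrable π α q hq K₂ hq0 hq2 θ₁ h1m h10 hint1 H1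
  have hFt := F_integrable π α q hq K₂ hq0 hq2 θt htm htn hintt Ht
  -- pointwise a.e. inequality for the second term
  have hptwise : ∀ᵐ x ∂π,
      t * (q x * Real.sqrt (θ₀ x) * ∫ y, Real.sqrt (θ₀ y) ∂α x)
        + (1 - t) * (q x * Real.sqrt (θ₁ x) * ∫ y, Real.sqrt (θ₁ y) ∂α x)
      ≤ q x * Real.sqrt (θt x) * ∫ y, Real.sqrt (θt y) ∂α x := by
    filter_upwards [hae0, hae1, haet] with x hx0 hx1 hxt
    have i0 := sqrt_integrable (α x) θ₀ h0m h00 hx0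
    have i1 := sqrt_integrable (α x) θ₁ h1m h10 hx1
    have it := sqrt_integrable (α x) θt htm htn hxt
    calc t * (q x * Real.sqrt (θ₀ x) * ∫ y, Real.sqrt (θ₀ y) ∂α x)
          + (1 - t) * (q x * Real.sqrt (θ₁ x) * ∫ y, Real.sqrt (θ₁ y) ∂α x)
        = ∫ y, (t * (q x * Real.sqrt (θ₀ x)) * Real.sqrt (θ₀ y)
            + (1 - t) * (q x * Real.sqrt (θ₁ x)) * Real.sqrt (θ₁ y)) ∂α x := by
          rw [integral_add (i0.const_mul _) (i1.const_mul _),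
            integral_const_mul, integral_const_mul]
          ring
      _ ≤ ∫ y, (q x * Real.sqrt (θt x)) * Real.sqrt (θt y) ∂α x := by
          refine integral_mono ((i0.const_mul _).add (i1.const_mul _)) (it.const_mul _)
            fun y => ?_
          have h := mul_le_mul_of_nonneg_left
            (sqrtCS (h00 x) (h10 x) (h00 y) (h10 y) ht0 ht1) (hq0 x)
          simp only [hθt]
          nlinarith [h]
      _ = q x * Real.sqrt (θt x) * ∫ y, Real.sqrt (θt y) ∂α x := by
          rw [integral_const_mul, mul_assoc]
  -- the second terms compare
  have hA : t * (∫ x, q x * Real.sqrt (θ₀ x) * (∫ y, Real.sqrt (θ₀ y) ∂α x) ∂π)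
      + (1 - t) * (∫ x, q x * Real.sqrt (θ₁ x) * (∫ y, Real.sqrt (θ₁ y) ∂α x) ∂π)
      ≤ ∫ x, q x * Real.sqrt (θt x) * (∫ y, Real.sqrt (θt y) ∂α x) ∂π := by
    have h := integral_mono_ae ((hF0.const_mul t).add (hF1.const_mul (1 - t))) hFt hptwise
    simp only [Pi.add_apply] at h
    rwa [integral_add (hF0.const_mul t) (hF1.const_mul (1 - t)),
      integral_const_mul, integral_const_mul] at h
  -- the first terms are linear
  have hqb0 : Integrable (fun x => q x * θ₀ x) π :=
    hint0.bdd_mul hq.aestronglyMeasurable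
      (ae_of_all _ fun x => by rw [Real.norm_eq_abs, abs_of_nonneg (hq0 x)]; exact hq2 x)
  have hqb1 : Integrable (fun x => q x * θ₁ x) π :=
    hint1.bdd_mul hq.aestronglyMeasurable
      (ae_of_all _ fun x => by rw [Real.norm_eq_abs, abs_of_nonneg (hq0 x)]; exact hq2 x)
  have hLin : ∫ x, q x * θt x ∂π
      = t * (∫ x, q x * θ₀ x ∂π) + (1 - t) * (∫ x, q x * θ₁ x ∂π) := by
    rw [← integral_const_mul, ← integral_const_mul,
      ← integral_add (hqb0.const_mul t) (hqb1.const_mul (1 - t))]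
    refine integral_congr_ae (ae_of_all _ fun x => ?_)
    simp only [hθt]
    ring
  rw [hJ, hJ, hJ]
  linarith [hA, hLin]
end

section
/- Let (V, A) be a measurable space, k: V → ℝ bounded measurable, and θ a probability measure on V. Then -log ∫_V e^{-k} dθ = inf over probability measures γ on V of [R(γ‖θ) + ∫_V k dγ], and the infimum is attained uniquely at γ_0 with dγ_0/dθ(x) = e^{-k(x)} / ∫_V e^{-k} dθ. -/
open MeasureTheory
open scoped Classical

/-- Relative entropy with values in `EReal`:
`∫ log (dγ/dθ) dγ` when `γ ≪ θ` and the integrand is integrable, `+∞` otherwise. -/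
noncomputable def relEntE {V : Type*} [MeasurableSpace V] (γ θ : Measure V) : EReal :=
  if γ ≪ θ ∧ Integrable (fun x => Real.log (γ.rnDeriv θ x).toReal) γ
  then ((∫ x, Real.log (γ.rnDeriv θ x).toReal ∂γ : ℝ) : EReal) else ⊤

open Real

lemma sub_one_le_mul_log (t : ℝ) (ht : 0 ≤ t) : t - 1 ≤ t * Real.log t := by
  rcases eq_or_lt_of_le ht with h | h
  · simp [← h]
  · have h1 := Real.log_le_sub_one_of_pos (inv_pos.2 h)
    rw [Real.log_inv] at h1
    have h2 := mul_le_mul_of_nonneg_left h1 h.le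
    have h3 : t * t⁻¹ = 1 := mul_inv_cancel₀ h.ne'
    nlinarith

lemma eq_one_of_mul_log_eq (t : ℝ) (ht : 0 ≤ t) (heq : t * Real.log t = t - 1) : t = 1 := by
  rcases eq_or_lt_of_le ht with h | h
  · rw [← h] at heq; norm_num at heq
  · by_contra hne
    have h1 := Real.log_lt_sub_one_of_pos (inv_pos.2 h) (by
      simp only [ne_eq, inv_eq_one]; exact hne)
    rw [Real.log_inv] at h1
    have h2 := mul_lt_mul_of_pos_left h1 h
    have h3 : t * t⁻¹ = 1 := mul_inv_cancel₀ h.ne'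
    nlinarith

/-- Gibbs' inequality with equality case. -/
lemma gibbs {V : Type*} [MeasurableSpace V] (γ ν : Measure V)
    [IsProbabilityMeasure γ] [IsProbabilityMeasure ν] (hγν : γ ≪ ν)
    (hint : Integrable (llr γ ν) γ) :
    0 ≤ ∫ x, llr γ ν x ∂γ ∧ (∫ x, llr γ ν x ∂γ = 0 → γ = ν) := by
  set g : V → ℝ := fun x => (γ.rnDeriv ν x).toReal with hgdef
  have hginteg : Integrable g ν := Measure.integrable_toReal_rnDeriv
  have hintν : Integrable (fun x => g x * Real.log (g x)) ν := by
    have := (integrable_rnDeriv_smul_iff hγν (f := llr γ ν)).2 hint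
    simpa [llr, smul_eq_mul] using this
  have h1 : ∫ x, llr γ ν x ∂γ = ∫ x, g x * Real.log (g x) ∂ν := by
    rw [← integral_rnDeriv_smul hγν (f := llr γ ν)]
    simp [llr, smul_eq_mul]; rfl
  have hgint1 : ∫ x, g x ∂ν = 1 := by
    rw [hgdef, Measure.integral_toReal_rnDeriv hγν]; simp
  have hsub : Integrable (fun x => g x - 1) ν := hginteg.sub (integrable_const 1)
  have hineq : 0 ≤ ∫ x, llr γ ν x ∂γ := by
    rw [h1]
    have hle : ∫ x, (g x - 1) ∂ν ≤ ∫ x, g x * Real.log (g x) ∂ν :=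
      integral_mono hsub hintν (fun x => sub_one_le_mul_log _ ENNReal.toReal_nonneg)
    rw [integral_sub hginteg (integrable_const 1), hgint1] at hle
    simpa using hle
  refine ⟨hineq, fun hzero => ?_⟩
  have h2 : ∫ x, (g x * Real.log (g x) - (g x - 1)) ∂ν = 0 := by
    rw [integral_sub hintν hsub, integral_sub hginteg (integrable_const 1), hgint1, ← h1, hzero]
    simp
  have hae : (fun x => g x * Real.log (g x) - (g x - 1)) =ᵐ[ν] 0 := by
    refine (integral_eq_zero_iff_of_nonneg_ae ?_ (hintν.sub hsub)).1 h2
    exact Filter.Eventually.of_forall fun x =>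
      sub_nonneg.2 (sub_one_le_mul_log _ ENNReal.toReal_nonneg)
  have hrn1 : γ.rnDeriv ν =ᵐ[ν] fun _ => (1 : ENNReal) := by
    filter_upwards [hae] with x hx
    have hx' : g x * Real.log (g x) = g x - 1 := by
      have := sub_eq_zero.1 hx
      simpa using this
    have := eq_one_of_mul_log_eq _ ENNReal.toReal_nonneg hx'
    exact (ENNReal.toReal_eq_one_iff _).1 this
  calc γ = ν.withDensity (γ.rnDeriv ν) := (Measure.withDensity_rnDeriv_eq γ ν hγν).symm
    _ = ν.withDensity (fun _ => 1) := withDensity_congr_ae hrn1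
    _ = ν := by simp

lemma relEntE_eq_llr {V : Type*} [MeasurableSpace V] (γ ν : Measure V) :
    relEntE γ ν = if γ ≪ ν ∧ Integrable (llr γ ν) γ
      then ((∫ x, llr γ ν x ∂γ : ℝ) : EReal) else ⊤ := rfl

/-- Donsker–Varadhan variational formula: for bounded measurable `k`
and a probability measure `θ`,
`-log ∫ e^{-k} dθ = inf_γ [R(γ‖θ) + ∫ k dγ]`, and the infimum is attained
uniquely at `γ₀` with `dγ₀/dθ = e^{-k} / ∫ e^{-k} dθ`. -/
theorem stmt11 {V : Type*} [MeasurableSpace V] (θ : Measure V) [IsProbabilityMeasure θ]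
    (k : V → ℝ) (hk : Measurable k) (hbdd : ∃ M : ℝ, ∀ x, |k x| ≤ M) :
    IsLeast {r : EReal | ∃ γ : Measure V, IsProbabilityMeasure γ ∧
        r = relEntE γ θ + ((∫ x, k x ∂γ : ℝ) : EReal)}
      (((-Real.log (∫ x, Real.exp (-(k x)) ∂θ) : ℝ) : EReal)) ∧
    ∀ γ : Measure V, IsProbabilityMeasure γ →
      relEntE γ θ + ((∫ x, k x ∂γ : ℝ) : EReal)
        = ((-Real.log (∫ x, Real.exp (-(k x)) ∂θ) : ℝ) : EReal) →
      γ = θ.withDensity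
          (fun x => ENNReal.ofReal (Real.exp (-(k x)) / ∫ x, Real.exp (-(k x)) ∂θ)) := by
  obtain ⟨M, hM⟩ := hbdd
  have hexp : Integrable (fun x => Real.exp (-(k x))) θ := by
    refine (integrable_const (Real.exp M)).mono' (hk.neg.exp).aestronglyMeasurable
      (Filter.Eventually.of_forall fun x => ?_)
    rw [Real.norm_eq_abs, abs_of_pos (Real.exp_pos _)]
    exact Real.exp_le_exp.2 ((neg_le_abs _).trans (hM x))
  have hkint : ∀ (γ : Measure V), IsProbabilityMeasure γ → Integrable k γ := by
    intro γ hγ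
    haveI := hγ
    exact (integrable_const M).mono' hk.aestronglyMeasurable
      (Filter.Eventually.of_forall fun x => by simpa [Real.norm_eq_abs] using hM x)
  set γ₀ : Measure V := θ.tilted (fun x => -(k x)) with hγ₀def
  haveI hprob : IsProbabilityMeasure γ₀ := isProbabilityMeasure_tilted hexp
  have hwd : θ.withDensity
      (fun x => ENNReal.ofReal (Real.exp (-(k x)) / ∫ x, Real.exp (-(k x)) ∂θ)) = γ₀ := rfl
  -- key identity
  have key : ∀ γ : Measure V, IsProbabilityMeasure γ →
      relEntE γ θ + ((∫ x, k x ∂γ : ℝ) : EReal)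
        = relEntE γ γ₀ + ((-Real.log (∫ x, Real.exp (-(k x)) ∂θ) : ℝ) : EReal) := by
    intro γ hγ
    haveI := hγ
    have hequiv : (γ ≪ θ ∧ Integrable (llr γ θ) γ) ↔ (γ ≪ γ₀ ∧ Integrable (llr γ γ₀) γ) := by
      constructor
      · rintro ⟨hac, hil⟩
        refine ⟨hac.trans (absolutelyContinuous_tilted hexp), ?_⟩
        have h := integrable_llr_tilted_right (f := fun x => -(k x)) hac
          ((hkint γ hγ).neg) hil hexp
        exact h
      · rintro ⟨hac, hil⟩
        have hacθ : γ ≪ θ := hac.trans (tilted_absolutelyContinuous θ _)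
        refine ⟨hacθ, ?_⟩
        have haeq : llr γ γ₀ =ᵐ[γ] fun x =>
            -(-(k x)) + Real.log (∫ z, Real.exp (-(k z)) ∂θ) + llr γ θ x :=
          llr_tilted_right (f := fun x => -(k x)) hacθ hexp
        have hint2 : Integrable
            (fun x => llr γ γ₀ x - k x - Real.log (∫ z, Real.exp (-(k z)) ∂θ)) γ :=
          (hil.sub (hkint γ hγ)).sub (integrable_const _)
        refine hint2.congr ?_
        filter_upwards [haeq] with x hx
        rw [hx]
        ring
    by_cases hc : γ ≪ θ ∧ Integrable (llr γ θ) γ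
    · have hc' := hequiv.1 hc
      have hform : ∫ x, llr γ γ₀ x ∂γ
          = ∫ x, llr γ θ x ∂γ - ∫ x, -(k x) ∂γ + Real.log (∫ x, Real.exp (-(k x)) ∂θ) :=
        integral_llr_tilted_right (f := fun x => -(k x)) hc.1 ((hkint γ hγ).neg) hexp hc.2
      rw [integral_neg] at hform
      rw [relEntE_eq_llr γ θ, relEntE_eq_llr γ γ₀, if_pos hc, if_pos hc',
        ← EReal.coe_add, ← EReal.coe_add, EReal.coe_eq_coe_iff, hform]
      ring
    · rw [relEntE_eq_llr γ θ, relEntE_eq_llr γ γ₀, if_neg hc, if_neg (hequiv.not.1 hc),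
        EReal.top_add_coe, EReal.top_add_coe]
  -- relEntE γ₀ γ₀ = 0
  have hllr0 : llr γ₀ γ₀ =ᵐ[γ₀] 0 := by
    filter_upwards [Measure.rnDeriv_self γ₀] with x hx
    simp [llr, hx]
  have hself : relEntE γ₀ γ₀ = 0 := by
    rw [relEntE_eq_llr, if_pos ⟨Measure.AbsolutelyContinuous.refl γ₀,
      (integrable_zero _ _ _).congr hllr0.symm⟩]
    rw [integral_congr_ae hllr0]
    simp
  have hnn : ∀ γ : Measure V, IsProbabilityMeasure γ → (0 : EReal) ≤ relEntE γ γ₀ := by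
    intro γ hγ
    haveI := hγ
    rw [relEntE_eq_llr]
    split_ifs with hc
    · exact_mod_cast (gibbs γ γ₀ hc.1 hc.2).1
    · exact le_top
  refine ⟨⟨⟨γ₀, hprob, ?_⟩, ?_⟩, ?_⟩
  · rw [key γ₀ hprob, hself, zero_add]
  · rintro r ⟨γ, hγ, rfl⟩
    rw [key γ hγ]
    calc ((-Real.log (∫ x, Real.exp (-(k x)) ∂θ) : ℝ) : EReal)
        = 0 + ((-Real.log (∫ x, Real.exp (-(k x)) ∂θ) : ℝ) : EReal) := (zero_add _).symm
      _ ≤ relEntE γ γ₀ + _ := add_le_add_left (hnn γ hγ) _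
  · intro γ hγ heq
    haveI := hγ
    rw [key γ hγ] at heq
    rw [hwd]
    by_cases hc : γ ≪ γ₀ ∧ Integrable (llr γ γ₀) γ
    · rw [relEntE_eq_llr, if_pos hc, ← EReal.coe_add, EReal.coe_eq_coe_iff] at heq
      have hzero : ∫ x, llr γ γ₀ x ∂γ = 0 := by linarith
      exact (gibbs γ γ₀ hc.1 hc.2).2 hzero
    · rw [relEntE_eq_llr, if_neg hc, EReal.top_add_coe] at heq
      exact absurd heq.symm (EReal.coe_ne_top _)
end

section
/- Let S be a standard Borel space, μ a probability measure on S×S with equal marginals [μ]_1 = [μ]_2, and let p be the kernel with μ = [μ]_1 ⊗ p; let α be another Markov kernel on S. For each N ≥ 1, the relative entropy of the N-step path measures satisfies R([μ]_1 ⊗ p ⊗ ··· ⊗ p ‖ [μ]_1 ⊗ α ⊗ ··· ⊗ α) = N · R([μ]_1 ⊗ p ‖ [μ]_1 ⊗ α), where the path measures on S^{N+1} are built by composing the kernels N times starting from [μ]_1. -/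
open MeasureTheory ProbabilityTheory
open scoped Classical
open scoped ENNReal

/-- Relative entropy (Kullback–Leibler divergence) with values in `ℝ≥0∞`. -/
noncomputable def relEnt {V : Type*} [MeasurableSpace V] (γ θ : Measure V) : ℝ≥0∞ :=
  if γ ≪ θ ∧ Integrable (fun x => Real.log (γ.rnDeriv θ x).toReal) γ
  then ENNReal.ofReal (∫ x, Real.log (γ.rnDeriv θ x).toReal ∂γ) else ⊤

/-- Law on `S^{n+1}` of a Markov chain with initial distribution `ν` and
transition kernel `κ`: `ν ⊗ κ ⊗ ⋯ ⊗ κ` (`n` kernel factors). -/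
noncomputable def pathMeasure {S : Type*} [MeasurableSpace S]
    (ν : Measure S) (κ : Kernel S S) : (n : ℕ) → Measure (Fin (n + 1) → S)
  | 0 => ν.map (fun x => fun _ => x)
  | (n + 1) =>
      ((pathMeasure ν κ n) ⊗ₘ
        (κ.comap (fun f : Fin (n + 1) → S => f (Fin.last n)) (measurable_pi_apply _))).map
        (fun p => Fin.snoc p.1 p.2)

set_option linter.unusedSectionVars false
set_option linter.unusedVariables false
set_option maxHeartbeats 1000000

section CompProdRnDeriv

variable {α γ : Type*} {mα : MeasurableSpace α} {mγ : MeasurableSpace γ}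

lemma my_compProd_withDensity_left (ν : Measure α) [IsFiniteMeasure ν]
    (κ : Kernel α γ) [IsFiniteKernel κ] {g : α → ℝ≥0∞} (hg : Measurable g) :
    ν.withDensity g ⊗ₘ κ = (ν ⊗ₘ κ).withDensity (fun q => g q.1) := by
  have hgm : Measurable fun q : α × γ => g q.1 := hg.comp measurable_fst
  ext s hs
  rw [Measure.compProd_apply hs, withDensity_apply _ hs, ← lintegral_indicator hs _,
    Measure.lintegral_compProd (hgm.indicator hs),
    lintegral_withDensity_eq_lintegral_mul _ hg (Kernel.measurable_kernel_prodMk_left hs)]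
  refine lintegral_congr fun a => ?_
  simp only [Pi.mul_apply]
  rw [← lintegral_indicator_one (measurable_prodMk_left hs),
    ← lintegral_const_mul _ (measurable_one.indicator (measurable_prodMk_left hs))]
  refine (lintegral_congr fun b => ?_).symm
  simp only [Set.indicator, Set.mem_preimage, Pi.one_apply]
  by_cases h : (a, b) ∈ s <;> simp [h]

lemma my_compProd_withDensity_right (μ : Measure α) [IsFiniteMeasure μ]
    (η : Kernel α γ) [IsFiniteKernel η] {f : α → γ → ℝ≥0∞}
    (hf : Measurable (Function.uncurry f)) [IsSFiniteKernel (η.withDensity f)] :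
    μ ⊗ₘ η.withDensity f = (μ ⊗ₘ η).withDensity (fun q => f q.1 q.2) := by
  have hfm : Measurable fun q : α × γ => f q.1 q.2 :=
    hf.comp (measurable_fst.prodMk measurable_snd)
  ext s hs
  rw [Measure.compProd_apply hs, withDensity_apply _ hs, ← lintegral_indicator hs _,
    Measure.lintegral_compProd (hfm.indicator hs)]
  refine lintegral_congr fun a => ?_
  rw [Kernel.withDensity_apply' _ hf, ← lintegral_indicator (measurable_prodMk_left hs) _]
  refine lintegral_congr fun x => ?_
  simp only [Set.indicator, Set.mem_preimage]

variable [MeasurableSpace.CountableOrCountablyGenerated α γ]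

lemma my_mutuallySingular_compProd_singularPart (ν' ν : Measure α) [IsFiniteMeasure ν']
    [IsFiniteMeasure ν] (κ η : Kernel α γ) [IsFiniteKernel κ] [IsFiniteKernel η] :
    (ν' ⊗ₘ κ.singularPart η) ⟂ₘ (ν ⊗ₘ η) := by
  refine ⟨(Kernel.mutuallySingularSet κ η)ᶜ,
    (Kernel.measurableSet_mutuallySingularSet κ η).compl, ?_, ?_⟩
  · rw [Measure.compProd_apply (Kernel.measurableSet_mutuallySingularSet κ η).compl]
    have h0 : ∀ a, ((κ.singularPart η) a) (Prod.mk a ⁻¹' Kernel.mutuallySingularSet κ η)ᶜ = 0 :=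
      fun a => Kernel.singularPart_compl_mutuallySingularSetSlice κ η a
    simp only [Set.preimage_compl] at h0 ⊢
    simp [h0]
  · rw [compl_compl, Measure.compProd_apply (Kernel.measurableSet_mutuallySingularSet κ η)]
    have h0 : ∀ a, (η a) (Prod.mk a ⁻¹' Kernel.mutuallySingularSet κ η) = 0 :=
      fun a => Kernel.measure_mutuallySingularSetSlice κ η a
    simp [h0]

lemma my_mutuallySingular_singularPart_compProd (μ ν : Measure α) [IsFiniteMeasure μ]
    [IsFiniteMeasure ν] (κ η : Kernel α γ) [IsFiniteKernel κ] [IsFiniteKernel η] :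
    (μ.singularPart ν ⊗ₘ κ) ⟂ₘ (ν ⊗ₘ η) := by
  obtain ⟨t, ht, ht1, ht2⟩ := μ.mutuallySingular_singularPart ν
  refine ⟨t ×ˢ Set.univ, ht.prod MeasurableSet.univ, ?_, ?_⟩
  · rw [Measure.compProd_apply_prod ht MeasurableSet.univ]
    have h0 : (μ.singularPart ν).restrict t = 0 := Measure.restrict_eq_zero.mpr ht1
    rw [h0]; simp
  · have : (t ×ˢ (Set.univ : Set γ))ᶜ = tᶜ ×ˢ Set.univ := by
      ext q; simp
    rw [this, Measure.compProd_apply_prod ht.compl MeasurableSet.univ]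
    have : ν.restrict tᶜ = 0 := by
      rw [Measure.restrict_eq_zero]; exact ht2
    rw [this]; simp

end CompProdRnDeriv

section CompProdRnDeriv2

variable {α γ : Type*} {mα : MeasurableSpace α} {mγ : MeasurableSpace γ}
  [MeasurableSpace.CountableOrCountablyGenerated α γ]

lemma my_compProd_eq_add (μ ν : Measure α) [IsFiniteMeasure μ] [IsFiniteMeasure ν]
    (κ η : Kernel α γ) [IsFiniteKernel κ] [IsFiniteKernel η] :
    μ ⊗ₘ κ = ((ν.withDensity (μ.rnDeriv ν) ⊗ₘ κ.singularPart η) + (μ.singularPart ν ⊗ₘ κ))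
      + (ν ⊗ₘ η).withDensity (fun q => μ.rnDeriv ν q.1 * κ.rnDeriv η q.1 q.2) := by
  have hg : Measurable (μ.rnDeriv ν) := Measure.measurable_rnDeriv μ ν
  have hfin : IsFiniteMeasure (ν.withDensity (μ.rnDeriv ν)) :=
    isFiniteMeasure_of_le μ (μ.withDensity_rnDeriv_le ν)
  have e1 : μ ⊗ₘ κ = μ.singularPart ν ⊗ₘ κ + ν.withDensity (μ.rnDeriv ν) ⊗ₘ κ := by
    conv_lhs => rw [μ.haveLebesgueDecomposition_add ν]
    rw [Measure.compProd_add_left]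
  have e2 : ν.withDensity (μ.rnDeriv ν) ⊗ₘ κ
      = ν.withDensity (μ.rnDeriv ν) ⊗ₘ η.withDensity (κ.rnDeriv η)
        + ν.withDensity (μ.rnDeriv ν) ⊗ₘ κ.singularPart η := by
    conv_lhs => rw [← Kernel.rnDeriv_add_singularPart κ η]
    rw [Measure.compProd_add_right]
  have h1 : ν.withDensity (μ.rnDeriv ν) ⊗ₘ η.withDensity (κ.rnDeriv η)
      = (ν ⊗ₘ η).withDensity (fun q => μ.rnDeriv ν q.1 * κ.rnDeriv η q.1 q.2) := by
    rw [my_compProd_withDensity_right _ _ (Kernel.measurable_rnDeriv κ η),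
      my_compProd_withDensity_left _ _ hg, ← withDensity_mul]
    · rfl
    · exact hg.comp measurable_fst
    · exact Kernel.measurable_rnDeriv κ η
  rw [e1, e2, h1]
  abel

lemma my_rnDeriv_compProd (μ ν : Measure α) [IsFiniteMeasure μ] [IsFiniteMeasure ν]
    (κ η : Kernel α γ) [IsFiniteKernel κ] [IsFiniteKernel η] :
    (fun q => μ.rnDeriv ν q.1 * κ.rnDeriv η q.1 q.2) =ᵐ[ν ⊗ₘ η] (μ ⊗ₘ κ).rnDeriv (ν ⊗ₘ η) := by
  have hfin : IsFiniteMeasure (ν.withDensity (μ.rnDeriv ν)) :=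
    isFiniteMeasure_of_le μ (μ.withDensity_rnDeriv_le ν)
  refine Measure.eq_rnDeriv (μ := μ ⊗ₘ κ)
    (((Measure.measurable_rnDeriv μ ν).comp measurable_fst).mul (Kernel.measurable_rnDeriv κ η))
    (Measure.MutuallySingular.add_left
      (my_mutuallySingular_compProd_singularPart _ _ κ η)
      (my_mutuallySingular_singularPart_compProd μ ν κ η))
    (my_compProd_eq_add μ ν κ η)

lemma my_singular_eq_zero (μ ν : Measure α) [IsFiniteMeasure μ] [IsFiniteMeasure ν]
    (κ η : Kernel α γ) [IsFiniteKernel κ] [IsFiniteKernel η]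
    (h : μ ⊗ₘ κ ≪ ν ⊗ₘ η) :
    (ν.withDensity (μ.rnDeriv ν) ⊗ₘ κ.singularPart η) + (μ.singularPart ν ⊗ₘ κ) = 0 := by
  have hfin : IsFiniteMeasure (ν.withDensity (μ.rnDeriv ν)) :=
    isFiniteMeasure_of_le μ (μ.withDensity_rnDeriv_le ν)
  have hsing := Measure.eq_singularPart (μ := μ ⊗ₘ κ)
    (((Measure.measurable_rnDeriv μ ν).comp measurable_fst).mul (Kernel.measurable_rnDeriv κ η))
    (Measure.MutuallySingular.add_left
      (my_mutuallySingular_compProd_singularPart _ _ κ η)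
      (my_mutuallySingular_singularPart_compProd μ ν κ η))
    (my_compProd_eq_add μ ν κ η)
  rw [hsing, Measure.singularPart_eq_zero_of_ac h]

lemma my_absolutelyContinuous_compProd_iff (μ ν : Measure α) [IsFiniteMeasure μ]
    [IsFiniteMeasure ν] (κ η : Kernel α γ) [IsMarkovKernel κ] [IsMarkovKernel η] :
    μ ⊗ₘ κ ≪ ν ⊗ₘ η ↔ μ ≪ ν ∧ ∀ᵐ a ∂μ, κ a ≪ η a := by
  constructor
  · intro h
    have h0 := my_singular_eq_zero μ ν κ η h
    have hfin : IsFiniteMeasure (ν.withDensity (μ.rnDeriv ν)) :=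
      isFiniteMeasure_of_le μ (μ.withDensity_rnDeriv_le ν)
    have hcg := congrArg (fun m : Measure (α × γ) => m Set.univ) h0
    simp only [Measure.coe_add, Pi.add_apply, Measure.coe_zero, Pi.zero_apply] at hcg
    have h1 : ν.withDensity (μ.rnDeriv ν) ⊗ₘ κ.singularPart η = 0 :=
      Measure.measure_univ_eq_zero.mp
        (le_antisymm (hcg ▸ le_self_add : _ ≤ (0:ℝ≥0∞)) zero_le)
    have hsp : μ.singularPart ν = 0 := by
      have h2 : (μ.singularPart ν ⊗ₘ κ) Set.univ = 0 :=
        le_antisymm (hcg ▸ le_add_self : _ ≤ (0:ℝ≥0∞)) zero_le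
      rw [Measure.compProd_apply_univ] at h2
      exact Measure.measure_univ_eq_zero.mp h2
    have hμν : μ ≪ ν := Measure.singularPart_eq_zero _ _ |>.mp hsp
    refine ⟨hμν, ?_⟩
    have hback : ν.withDensity (μ.rnDeriv ν) = μ := Measure.withDensity_rnDeriv_eq μ ν hμν
    rw [hback] at h1
    have h3 : ∫⁻ a, (κ.singularPart η) a Set.univ ∂μ = 0 := by
      have := congrArg (fun m : Measure (α × γ) => m Set.univ) h1
      simp only [Measure.coe_zero, Pi.zero_apply] at this
      rwa [Measure.compProd_apply MeasurableSet.univ] at this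
    rw [lintegral_eq_zero_iff (Kernel.measurable_coe _ MeasurableSet.univ)] at h3
    filter_upwards [h3] with a ha
    rw [← Kernel.singularPart_eq_zero_iff_absolutelyContinuous]
    have : (κ.singularPart η) a Set.univ = 0 := ha
    exact Measure.measure_univ_eq_zero.mp this
  · rintro ⟨hμν, hae⟩
    refine Measure.AbsolutelyContinuous.mk fun s hs hs0 => ?_
    rw [Measure.compProd_apply hs] at hs0 ⊢
    have h1 : ∀ᵐ a ∂ν, (η a) (Prod.mk a ⁻¹' s) = 0 := by
      rwa [lintegral_eq_zero_iff (Kernel.measurable_kernel_prodMk_left hs)] at hs0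
    have h2 : ∀ᵐ a ∂μ, (η a) (Prod.mk a ⁻¹' s) = 0 := hμν.ae_le h1
    rw [lintegral_eq_zero_iff (Kernel.measurable_kernel_prodMk_left hs)]
    filter_upwards [h2, hae] with a ha hac using hac ha

end CompProdRnDeriv2

section RealAnalysis

variable {X : Type*} {mX : MeasurableSpace X}

lemma my_pt_bound : ∀ t : ℝ≥0∞, t ≠ ⊤ → t * ENNReal.ofReal (-(Real.log t.toReal)) ≤ 1 := by
  intro t ht
  rcases eq_or_ne t 0 with rfl | ht0
  · simp
  have htR : 0 < t.toReal := ENNReal.toReal_pos ht0 ht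
  rcases le_or_gt 1 t.toReal with h1 | h1
  · simp [ENNReal.ofReal_of_nonpos (neg_nonpos.mpr (Real.log_nonneg h1))]
  · have hlog : -(Real.log t.toReal) ≤ (t.toReal)⁻¹ := by
      have := Real.log_le_sub_one_of_pos (inv_pos.mpr htR)
      rw [Real.log_inv] at this
      nlinarith [inv_pos.mpr htR]
    calc t * ENNReal.ofReal (-(Real.log t.toReal))
        ≤ t * ENNReal.ofReal (t.toReal)⁻¹ :=
          mul_le_mul_right (ENNReal.ofReal_le_ofReal hlog) t
      _ = ENNReal.ofReal t.toReal * ENNReal.ofReal (t.toReal)⁻¹ := by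
          rw [ENNReal.ofReal_toReal ht]
      _ = ENNReal.ofReal (t.toReal * (t.toReal)⁻¹) := by
          rw [ENNReal.ofReal_mul htR.le]
      _ ≤ 1 := by
          rw [mul_inv_cancel₀ htR.ne']
          simp

/-- Negative part of `log (dμ/dν)` has `μ`-lintegral at most `1`. -/
lemma my_neg_log_lintegral_le (μ ν : Measure X) [IsFiniteMeasure μ] [IsProbabilityMeasure ν]
    (hμν : μ ≪ ν) :
    ∫⁻ x, ENNReal.ofReal (-(Real.log (μ.rnDeriv ν x).toReal)) ∂μ ≤ 1 := by
  set g := μ.rnDeriv ν with hgdef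
  have hg_meas : Measurable g := Measure.measurable_rnDeriv μ ν
  set F := fun x => ENNReal.ofReal (-(Real.log (g x).toReal)) with hF
  have hF_meas : Measurable F := (hg_meas.ennreal_toReal.log.neg).ennreal_ofReal
  have hrw : ∫⁻ x, F x ∂μ = ∫⁻ x, (g * F) x ∂ν := by
    conv_lhs => rw [← Measure.withDensity_rnDeriv_eq μ ν hμν]
    rw [lintegral_withDensity_eq_lintegral_mul _ hg_meas hF_meas]
  rw [hrw]
  calc ∫⁻ x, (g * F) x ∂ν
      ≤ ∫⁻ _, 1 ∂ν := by
        refine lintegral_mono_ae ?_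
        filter_upwards [Measure.rnDeriv_ne_top μ ν] with x hx
        exact my_pt_bound _ hx
    _ = 1 := by simp

/-- Gibbs' inequality: the KL integrand has nonnegative integral. -/
lemma my_integral_log_rnDeriv_nonneg (μ ν : Measure X) [IsProbabilityMeasure μ]
    [IsProbabilityMeasure ν] (hμν : μ ≪ ν)
    (hint : Integrable (fun x => Real.log (μ.rnDeriv ν x).toReal) μ) :
    0 ≤ ∫ x, Real.log (μ.rnDeriv ν x).toReal ∂μ := by
  set g := μ.rnDeriv ν with hg
  have hg_meas : Measurable g := Measure.measurable_rnDeriv μ ν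
  have h_pos : ∀ᵐ x ∂μ, 0 < g x := Measure.rnDeriv_pos hμν
  have h_ne_top : ∀ᵐ x ∂μ, g x ≠ ⊤ := hμν.ae_le (Measure.rnDeriv_ne_top μ ν)
  -- the function (g x)⁻¹.toReal
  have hinv_lint : ∫⁻ x, (g x)⁻¹ ∂μ ≤ 1 := by
    have hrw : ∫⁻ x, (g x)⁻¹ ∂μ = ∫⁻ x, (g * fun x => (g x)⁻¹) x ∂ν := by
      conv_lhs => rw [← Measure.withDensity_rnDeriv_eq μ ν hμν]
      rw [lintegral_withDensity_eq_lintegral_mul _ hg_meas (g := fun x => (g x)⁻¹) hg_meas.inv]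
    rw [hrw]
    calc ∫⁻ x, (g * fun x => (g x)⁻¹) x ∂ν ≤ ∫⁻ _, 1 ∂ν :=
        lintegral_mono fun x => ENNReal.mul_inv_le_one (g x)
      _ = 1 := by simp
  have hinv_int : Integrable (fun x => ((g x)⁻¹).toReal) μ := by
    refine ⟨(hg_meas.inv.ennreal_toReal).aestronglyMeasurable, ?_⟩
    rw [hasFiniteIntegral_iff_ofReal (Filter.Eventually.of_forall fun x => ENNReal.toReal_nonneg)]
    calc ∫⁻ x, ENNReal.ofReal ((g x)⁻¹).toReal ∂μ ≤ ∫⁻ x, (g x)⁻¹ ∂μ :=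
        lintegral_mono fun x => ENNReal.ofReal_toReal_le
      _ ≤ 1 := hinv_lint
      _ < ⊤ := ENNReal.one_lt_top
  have h_ptwise : ∀ᵐ x ∂μ, 1 - ((g x)⁻¹).toReal ≤ Real.log (g x).toReal := by
    filter_upwards [h_pos, h_ne_top] with x hx0 hxt
    have hxR : 0 < (g x).toReal := ENNReal.toReal_pos hx0.ne' hxt
    have := Real.log_le_sub_one_of_pos (inv_pos.mpr hxR)
    rw [Real.log_inv] at this
    have hinv_eq : ((g x)⁻¹).toReal = ((g x).toReal)⁻¹ := by
      rw [ENNReal.toReal_inv]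
    rw [hinv_eq]
    linarith
  have h_int_le := integral_mono_ae ((integrable_const (1:ℝ)).sub hinv_int) hint h_ptwise
  simp only [Pi.sub_apply] at h_int_le
  have h_left : 0 ≤ ∫ x, (1 - ((g x)⁻¹).toReal) ∂μ := by
    rw [integral_sub (integrable_const _) hinv_int, integral_const]
    simp only [measure_univ, probReal_univ, ENNReal.toReal_one, smul_eq_mul, one_mul]
    have : ∫ x, ((g x)⁻¹).toReal ∂μ ≤ 1 := by
      rw [integral_eq_lintegral_of_nonneg_ae (f := fun x => ((g x)⁻¹).toReal)
        (Filter.Eventually.of_forall fun x => ENNReal.toReal_nonneg)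
        (hg_meas.inv.ennreal_toReal).aestronglyMeasurable]
      calc (∫⁻ x, ENNReal.ofReal ((g x)⁻¹).toReal ∂μ).toReal
          ≤ (1 : ℝ≥0∞).toReal := by
            refine ENNReal.toReal_mono ENNReal.one_ne_top ?_
            calc ∫⁻ x, ENNReal.ofReal ((g x)⁻¹).toReal ∂μ ≤ ∫⁻ x, (g x)⁻¹ ∂μ :=
                lintegral_mono fun x => ENNReal.ofReal_toReal_le
              _ ≤ 1 := hinv_lint
        _ = 1 := by simp
    linarith
  linarith

lemma my_ofReal_max_zero (a : ℝ) : ENNReal.ofReal (max a 0) = ENNReal.ofReal a := by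
  rcases le_total a 0 with h | h
  · rw [max_eq_right h, ENNReal.ofReal_zero, ENNReal.ofReal_of_nonpos h]
  · rw [max_eq_left h]

lemma my_integrable_of_neg_part {ρ : Measure X} {A : X → ℝ}
    (hA : AEStronglyMeasurable A ρ)
    (hAneg : ∫⁻ x, ENNReal.ofReal (-(A x)) ∂ρ < ⊤) :
    Integrable (fun x => max (-(A x)) 0) ρ := by
  refine ⟨(hA.aemeasurable.neg.max aemeasurable_const).aestronglyMeasurable, ?_⟩
  have h0 : (0 : X → ℝ) ≤ᵐ[ρ] fun x => max (-(A x)) 0 :=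
    Filter.Eventually.of_forall fun x => le_max_right _ _
  rw [hasFiniteIntegral_iff_ofReal h0]
  simpa only [my_ofReal_max_zero] using hAneg

lemma my_integrable_add_iff {ρ : Measure X} {A B : X → ℝ}
    (hA : AEStronglyMeasurable A ρ) (hB : AEStronglyMeasurable B ρ)
    (hAneg : ∫⁻ x, ENNReal.ofReal (-(A x)) ∂ρ < ⊤)
    (hBneg : ∫⁻ x, ENNReal.ofReal (-(B x)) ∂ρ < ⊤) :
    Integrable (fun x => A x + B x) ρ ↔ Integrable A ρ ∧ Integrable B ρ := by
  constructor
  · intro h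
    have hnA := my_integrable_of_neg_part hA hAneg
    have hnB := my_integrable_of_neg_part hB hBneg
    have hIA : Integrable A ρ := by
      refine Integrable.mono' ((h.add ((hnA.const_mul 2).add hnB))) hA ?_
      refine Filter.Eventually.of_forall fun x => ?_
      simp only [Real.norm_eq_abs, Pi.add_apply]
      rcases le_total (A x) 0 with hx | hx
      · have h1 : max (-(A x)) 0 = -(A x) := max_eq_left (by linarith)
        have h2 : -(B x) ≤ max (-(B x)) 0 := le_max_left _ _
        rw [abs_of_nonpos hx]
        nlinarith
      · have h1 : (0:ℝ) ≤ max (-(A x)) 0 := le_max_right _ _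
        have h2 : -(B x) ≤ max (-(B x)) 0 := le_max_left _ _
        rw [abs_of_nonneg hx]
        nlinarith
    exact ⟨hIA, (h.sub hIA).congr (Filter.Eventually.of_forall fun x => by simp)⟩
  · rintro ⟨h1, h2⟩
    exact h1.add h2

end RealAnalysis

section Chain

variable {α γ : Type*} {mα : MeasurableSpace α} {mγ : MeasurableSpace γ}
  [MeasurableSpace.CountableOrCountablyGenerated α γ]

/-- Conditional KL divergence of kernels given a base measure. -/
noncomputable def condKL (μ : Measure α) (κ η : Kernel α γ) : ℝ≥0∞ :=
  if (∀ᵐ a ∂μ, κ a ≪ η a)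
      ∧ Integrable (fun q : α × γ => Real.log (κ.rnDeriv η q.1 q.2).toReal) (μ ⊗ₘ κ)
  then ENNReal.ofReal (∫ q : α × γ, Real.log (κ.rnDeriv η q.1 q.2).toReal ∂(μ ⊗ₘ κ)) else ⊤

lemma my_neg_log_kernel_lintegral_le (μ : Measure α) [IsProbabilityMeasure μ]
    (κ η : Kernel α γ) [IsMarkovKernel κ] [IsMarkovKernel η]
    (hae : ∀ᵐ a ∂μ, κ a ≪ η a) :
    ∫⁻ q : α × γ, ENNReal.ofReal (-(Real.log (κ.rnDeriv η q.1 q.2).toReal)) ∂(μ ⊗ₘ κ) ≤ 1 := by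
  rw [Measure.lintegral_compProd
    (f := fun q : α × γ => ENNReal.ofReal (-(Real.log (κ.rnDeriv η q.1 q.2).toReal)))
    (((Kernel.measurable_rnDeriv κ η).ennreal_toReal.log.neg).ennreal_ofReal)]
  calc ∫⁻ a, ∫⁻ x, ENNReal.ofReal (-(Real.log (κ.rnDeriv η a x).toReal)) ∂κ a ∂μ
      ≤ ∫⁻ _, 1 ∂μ := by
        refine lintegral_mono_ae ?_
        filter_upwards [hae] with a ha
        have h1 : ∀ᵐ x ∂κ a, κ.rnDeriv η a x = (κ a).rnDeriv (η a) x :=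
          ha.ae_le (Kernel.rnDeriv_eq_rnDeriv_measure (κ := κ) (η := η) (a := a))
        calc ∫⁻ x, ENNReal.ofReal (-(Real.log (κ.rnDeriv η a x).toReal)) ∂κ a
            = ∫⁻ x, ENNReal.ofReal (-(Real.log ((κ a).rnDeriv (η a) x).toReal)) ∂κ a := by
              refine lintegral_congr_ae ?_
              filter_upwards [h1] with x hx
              rw [hx]
          _ ≤ 1 := my_neg_log_lintegral_le (κ a) (η a) ha
    _ = 1 := by simp

lemma my_integral_log_kernel_nonneg (μ : Measure α) [IsProbabilityMeasure μ]
    (κ η : Kernel α γ) [IsMarkovKernel κ] [IsMarkovKernel η]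
    (hae : ∀ᵐ a ∂μ, κ a ≪ η a)
    (hint : Integrable (fun q : α × γ => Real.log (κ.rnDeriv η q.1 q.2).toReal) (μ ⊗ₘ κ)) :
    0 ≤ ∫ q : α × γ, Real.log (κ.rnDeriv η q.1 q.2).toReal ∂(μ ⊗ₘ κ) := by
  rw [Measure.integral_compProd hint]
  have hsec := (Measure.integrable_compProd_iff hint.aestronglyMeasurable).mp hint |>.1
  refine integral_nonneg_of_ae ?_
  filter_upwards [hae, hsec] with a ha hint_a
  have h1 : (fun x => Real.log (κ.rnDeriv η a x).toReal)
      =ᵐ[κ a] fun x => Real.log ((κ a).rnDeriv (η a) x).toReal := by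
    filter_upwards [ha.ae_le (Kernel.rnDeriv_eq_rnDeriv_measure (κ := κ) (η := η) (a := a))]
      with x hx
    rw [hx]
  rw [integral_congr_ae h1]
  exact my_integral_log_rnDeriv_nonneg (κ a) (η a) ha ((hint_a.congr h1))

lemma my_ae_fst (μ : Measure α) [SFinite μ] (κ : Kernel α γ) [IsSFiniteKernel κ]
    {P : α → Prop} (hP : MeasurableSet {a | P a}) (h : ∀ᵐ a ∂μ, P a) :
    ∀ᵐ q ∂(μ ⊗ₘ κ), P q.1 :=
  Measure.ae_compProd_of_ae_ae (measurable_fst hP)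
    (h.mono fun _ ha => Filter.Eventually.of_forall fun _ => ha)

lemma my_relEnt_compProd (μ ν : Measure α) [IsProbabilityMeasure μ] [IsProbabilityMeasure ν]
    (κ η : Kernel α γ) [IsMarkovKernel κ] [IsMarkovKernel η] :
    relEnt (μ ⊗ₘ κ) (ν ⊗ₘ η) = relEnt μ ν + condKL μ κ η := by
  by_cases hac : μ ⊗ₘ κ ≪ ν ⊗ₘ η
  · obtain ⟨hμν, hae⟩ := (my_absolutelyContinuous_compProd_iff μ ν κ η).mp hac
    set g : α → ℝ≥0∞ := μ.rnDeriv ν with hgdef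
    have hg_meas : Measurable g := Measure.measurable_rnDeriv μ ν
    set L1 : α × γ → ℝ := fun q => Real.log (g q.1).toReal with hL1def
    set L2 : α × γ → ℝ := fun q => Real.log (κ.rnDeriv η q.1 q.2).toReal with hL2def
    have hL1meas : Measurable L1 := (hg_meas.comp measurable_fst).ennreal_toReal.log
    have hL2meas : Measurable L2 := (Kernel.measurable_rnDeriv κ η).ennreal_toReal.log
    have hmap : (μ ⊗ₘ κ).map Prod.fst = μ := Measure.fst_compProd μ κ
    -- a.e. positivity and finiteness
    have hgpos : ∀ᵐ q ∂(μ ⊗ₘ κ), 0 < g q.1 ∧ g q.1 ≠ ⊤ := by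
      refine my_ae_fst (P := fun a => 0 < g a ∧ g a ≠ ⊤) μ κ ?_ ?_
      · exact (hg_meas measurableSet_Ioi).inter (hg_meas (measurableSet_singleton ⊤)).compl
      · filter_upwards [Measure.rnDeriv_pos hμν, hμν.ae_le (Measure.rnDeriv_ne_top μ ν)]
          with a h1 h2
        exact ⟨h1, h2⟩
    have hfpos : ∀ᵐ q ∂(μ ⊗ₘ κ), 0 < κ.rnDeriv η q.1 q.2 ∧ κ.rnDeriv η q.1 q.2 ≠ ⊤ := by
      refine Measure.ae_compProd_of_ae_ae ?_ ?_
      · exact ((Kernel.measurable_rnDeriv κ η) measurableSet_Ioi).inter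
          ((Kernel.measurable_rnDeriv κ η) (measurableSet_singleton ⊤)).compl
      · filter_upwards [hae] with a ha
        filter_upwards [Kernel.rnDeriv_pos ha, ha.ae_le (Kernel.rnDeriv_ne_top κ η)]
          with x h1 h2
        exact ⟨h1, h2⟩
    have hprod : ∀ᵐ q ∂(μ ⊗ₘ κ),
        (μ ⊗ₘ κ).rnDeriv (ν ⊗ₘ η) q = g q.1 * κ.rnDeriv η q.1 q.2 :=
      hac.ae_le (my_rnDeriv_compProd μ ν κ η).symm
    have hLeq : (fun q => Real.log ((μ ⊗ₘ κ).rnDeriv (ν ⊗ₘ η) q).toReal)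
        =ᵐ[μ ⊗ₘ κ] fun q => L1 q + L2 q := by
      filter_upwards [hprod, hgpos, hfpos] with q hq hg hf
      rw [hq, ENNReal.toReal_mul,
        Real.log_mul (ENNReal.toReal_pos hg.1.ne' hg.2).ne' (ENNReal.toReal_pos hf.1.ne' hf.2).ne']
    -- negative parts have finite integral
    have hL1lint : ∫⁻ q, ENNReal.ofReal (-(L1 q)) ∂(μ ⊗ₘ κ)
        = ∫⁻ a, ENNReal.ofReal (-(Real.log (g a).toReal)) ∂μ := by
      conv_rhs => rw [← hmap]
      rw [lintegral_map (f := fun a => ENNReal.ofReal (-(Real.log (g a).toReal)))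
        (hg_meas.ennreal_toReal.log.neg.ennreal_ofReal) measurable_fst]
    have hL1neg : ∫⁻ q, ENNReal.ofReal (-(L1 q)) ∂(μ ⊗ₘ κ) < ⊤ := by
      rw [hL1lint]
      exact lt_of_le_of_lt (my_neg_log_lintegral_le μ ν hμν) ENNReal.one_lt_top
    have hL2neg : ∫⁻ q, ENNReal.ofReal (-(L2 q)) ∂(μ ⊗ₘ κ) < ⊤ :=
      lt_of_le_of_lt (my_neg_log_kernel_lintegral_le μ κ η hae) ENNReal.one_lt_top
    -- integrability transfer for the first component
    have hL1int_iff : Integrable L1 (μ ⊗ₘ κ)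
        ↔ Integrable (fun a => Real.log (g a).toReal) μ := by
      conv_rhs => rw [← hmap]
      exact (integrable_map_measure (hg_meas.ennreal_toReal.log.aestronglyMeasurable)
        measurable_fst.aemeasurable).symm
    have hL1int_eq : ∫ q, L1 q ∂(μ ⊗ₘ κ) = ∫ a, Real.log (g a).toReal ∂μ := by
      conv_rhs => rw [← hmap]
      rw [integral_map measurable_fst.aemeasurable
        (hg_meas.ennreal_toReal.log.aestronglyMeasurable)]
    by_cases h1 : Integrable (fun a => Real.log (g a).toReal) μ
    · by_cases h2 : Integrable L2 (μ ⊗ₘ κ)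
      · -- all integrable: the main equality
        have hintL : Integrable (fun q => L1 q + L2 q) (μ ⊗ₘ κ) :=
          (hL1int_iff.mpr h1).add h2
        have hint : Integrable
            (fun q => Real.log ((μ ⊗ₘ κ).rnDeriv (ν ⊗ₘ η) q).toReal) (μ ⊗ₘ κ) :=
          hintL.congr hLeq.symm
        have hnn1 : 0 ≤ ∫ q, L1 q ∂(μ ⊗ₘ κ) := by
          rw [hL1int_eq]
          exact my_integral_log_rnDeriv_nonneg μ ν hμν h1
        have hnn2 : 0 ≤ ∫ q, L2 q ∂(μ ⊗ₘ κ) := my_integral_log_kernel_nonneg μ κ η hae h2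
        rw [relEnt, if_pos ⟨hac, hint⟩, relEnt, if_pos ⟨hμν, h1⟩, condKL, if_pos ⟨hae, h2⟩,
          integral_congr_ae hLeq, integral_add (hL1int_iff.mpr h1) h2,
          ENNReal.ofReal_add hnn1 hnn2, hL1int_eq]
      · -- L2 not integrable
        have hnotint : ¬ Integrable
            (fun q => Real.log ((μ ⊗ₘ κ).rnDeriv (ν ⊗ₘ η) q).toReal) (μ ⊗ₘ κ) := by
          intro hint
          have := (my_integrable_add_iff hL1meas.aestronglyMeasurable
            hL2meas.aestronglyMeasurable hL1neg hL2neg).mp (hint.congr hLeq)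
          exact h2 this.2
        rw [relEnt, if_neg (fun h => hnotint h.2), condKL, if_neg (fun h => h2 h.2)]
        simp
    · -- L1 not integrable
      have hnotint : ¬ Integrable
          (fun q => Real.log ((μ ⊗ₘ κ).rnDeriv (ν ⊗ₘ η) q).toReal) (μ ⊗ₘ κ) := by
        intro hint
        have := (my_integrable_add_iff hL1meas.aestronglyMeasurable
          hL2meas.aestronglyMeasurable hL1neg hL2neg).mp (hint.congr hLeq)
        exact h1 (hL1int_iff.mp this.1)
      rw [relEnt, if_neg (fun h => hnotint h.2), relEnt, if_neg (fun h => h1 h.2)]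
      simp
  · rw [relEnt, if_neg (fun h => hac h.1)]
    by_cases hμν : μ ≪ ν
    · have hae : ¬ ∀ᵐ a ∂μ, κ a ≪ η a := fun h =>
        hac ((my_absolutelyContinuous_compProd_iff μ ν κ η).mpr ⟨hμν, h⟩)
      rw [condKL, if_neg (fun h => hae h.1)]
      simp
    · rw [relEnt, if_neg (fun h => hμν h.1)]
      simp

end Chain

section Glue

lemma my_relEnt_self {X : Type*} [MeasurableSpace X] (ρ : Measure X) [SigmaFinite ρ] :
    relEnt ρ ρ = 0 := by
  have h : (fun x => Real.log (ρ.rnDeriv ρ x).toReal) =ᵐ[ρ] fun _ => 0 := by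
    filter_upwards [Measure.rnDeriv_self ρ] with x hx
    rw [hx]
    simp
  rw [relEnt, if_pos ⟨Measure.AbsolutelyContinuous.rfl, (integrable_zero _ _ _).congr h.symm⟩,
    integral_congr_ae h]
  simp

lemma my_relEnt_map_equiv {X Y : Type*} [MeasurableSpace X] [MeasurableSpace Y]
    (e : X ≃ᵐ Y) (ρ θ : Measure X) [IsFiniteMeasure ρ] [IsFiniteMeasure θ] :
    relEnt (ρ.map e) (θ.map e) = relEnt ρ θ := by
  have hemb := e.measurableEmbedding
  have hACiff : ρ.map e ≪ θ.map e ↔ ρ ≪ θ := by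
    constructor
    · intro h
      have h2 := h.map e.symm.measurable
      rw [Measure.map_map e.symm.measurable e.measurable,
        Measure.map_map e.symm.measurable e.measurable] at h2
      simpa [Function.comp_def] using h2
    · exact fun h => h.map e.measurable
  by_cases hAC : ρ ≪ θ
  · have hrn : (fun x => (ρ.map e).rnDeriv (θ.map e) (e x)) =ᵐ[θ] ρ.rnDeriv θ :=
      hemb.rnDeriv_map ρ θ
    have hIeq : (fun x => Real.log ((ρ.map e).rnDeriv (θ.map e) (e x)).toReal)
        =ᵐ[ρ] fun x => Real.log (ρ.rnDeriv θ x).toReal := by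
      filter_upwards [hAC.ae_le hrn] with x hx
      rw [hx]
    have hint_iff : Integrable (fun y => Real.log ((ρ.map e).rnDeriv (θ.map e) y).toReal)
        (ρ.map e) ↔ Integrable (fun x => Real.log (ρ.rnDeriv θ x).toReal) ρ := by
      rw [hemb.integrable_map_iff]
      exact integrable_congr hIeq
    have hint_eq : ∫ y, Real.log ((ρ.map e).rnDeriv (θ.map e) y).toReal ∂(ρ.map e)
        = ∫ x, Real.log (ρ.rnDeriv θ x).toReal ∂ρ := by
      rw [hemb.integral_map]
      exact integral_congr_ae hIeq
    rw [relEnt, relEnt]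
    by_cases hint : Integrable (fun x => Real.log (ρ.rnDeriv θ x).toReal) ρ
    · rw [if_pos ⟨hACiff.mpr hAC, hint_iff.mpr hint⟩, if_pos ⟨hAC, hint⟩, hint_eq]
    · rw [if_neg (fun h => hint (hint_iff.mp h.2)), if_neg (fun h => hint h.2)]
  · rw [relEnt, relEnt, if_neg (fun h => hAC (hACiff.mp h.1)), if_neg (fun h => hAC h.1)]

lemma my_condKL_comap {V S : Type*} [MeasurableSpace V] [MeasurableSpace S]
    [MeasurableSpace.CountablyGenerated S]
    (ρ : Measure V) [IsProbabilityMeasure ρ] {φ : V → S} (hφ : Measurable φ)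
    (κ η : Kernel S S) [IsMarkovKernel κ] [IsMarkovKernel η] :
    condKL ρ (κ.comap φ hφ) (η.comap φ hφ) = condKL (ρ.map φ) κ η := by
  have hprob : IsProbabilityMeasure (ρ.map φ) := Measure.isProbabilityMeasure_map hφ.aemeasurable
  have hm : Measurable fun q : V × S => (φ q.1, q.2) :=
    (hφ.comp measurable_fst).prodMk measurable_snd
  have hACiff : (∀ᵐ ω ∂ρ, (κ.comap φ hφ) ω ≪ (η.comap φ hφ) ω)
      ↔ ∀ᵐ a ∂(ρ.map φ), κ a ≪ η a := by
    rw [MeasureTheory.ae_map_iff hφ.aemeasurable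
      (Kernel.measurableSet_absolutelyContinuous κ η)]
    constructor <;> intro h <;> filter_upwards [h] with ω hω <;>
      simpa [Kernel.comap_apply] using hω
  have hmap2 : (ρ ⊗ₘ κ.comap φ hφ).map (fun q => (φ q.1, q.2)) = (ρ.map φ) ⊗ₘ κ := by
    ext s hs
    rw [Measure.map_apply hm hs, Measure.compProd_apply (hm hs), Measure.compProd_apply hs,
      lintegral_map (Kernel.measurable_kernel_prodMk_left hs) hφ]
    refine lintegral_congr fun ω => ?_
    rw [Kernel.comap_apply]
    rfl
  by_cases hae : ∀ᵐ a ∂(ρ.map φ), κ a ≪ η a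
  · have hae' : ∀ᵐ ω ∂ρ, κ (φ ω) ≪ η (φ ω) := by
      have := hACiff.mpr hae
      filter_upwards [this] with ω hω
      simpa [Kernel.comap_apply] using hω
    have hEq : ∀ᵐ q ∂(ρ ⊗ₘ κ.comap φ hφ),
        (κ.comap φ hφ).rnDeriv (η.comap φ hφ) q.1 q.2 = κ.rnDeriv η (φ q.1) q.2 := by
      refine Measure.ae_compProd_of_ae_ae ?_ ?_
      · have hf1 : Measurable fun q : V × S =>
            (κ.comap φ hφ).rnDeriv (η.comap φ hφ) q.1 q.2 :=
          Kernel.measurable_rnDeriv _ _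
        have hf2 : Measurable fun q : V × S => κ.rnDeriv η (φ q.1) q.2 :=
          (Kernel.measurable_rnDeriv κ η).comp (hm)
        exact measurableSet_eq_fun hf1 hf2
      · filter_upwards [hae'] with ω hω
        have h1 := Kernel.rnDeriv_eq_rnDeriv_measure
          (κ := κ.comap φ hφ) (η := η.comap φ hφ) (a := ω)
        have h2 := Kernel.rnDeriv_eq_rnDeriv_measure (κ := κ) (η := η) (a := φ ω)
        rw [Kernel.comap_apply κ hφ ω, Kernel.comap_apply η hφ ω] at h1
        have h3 : (κ.comap φ hφ).rnDeriv (η.comap φ hφ) ω =ᵐ[η (φ ω)] κ.rnDeriv η (φ ω) :=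
          h1.trans h2.symm
        exact hω.ae_le h3
    have hIeq : (fun q : V × S =>
        Real.log ((κ.comap φ hφ).rnDeriv (η.comap φ hφ) q.1 q.2).toReal)
        =ᵐ[ρ ⊗ₘ κ.comap φ hφ]
          fun q => Real.log (κ.rnDeriv η (φ q.1) q.2).toReal := by
      filter_upwards [hEq] with q hq
      rw [hq]
    have hint_iff : Integrable
        (fun q : S × S => Real.log (κ.rnDeriv η q.1 q.2).toReal) ((ρ.map φ) ⊗ₘ κ)
        ↔ Integrable (fun q : V × S => Real.log (κ.rnDeriv η (φ q.1) q.2).toReal)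
          (ρ ⊗ₘ κ.comap φ hφ) := by
      rw [← hmap2]
      exact integrable_map_measure
        ((Kernel.measurable_rnDeriv κ η).ennreal_toReal.log.aestronglyMeasurable)
        hm.aemeasurable
    have hint_eq : ∫ q : V × S, Real.log (κ.rnDeriv η (φ q.1) q.2).toReal
          ∂(ρ ⊗ₘ κ.comap φ hφ)
        = ∫ q : S × S, Real.log (κ.rnDeriv η q.1 q.2).toReal ∂((ρ.map φ) ⊗ₘ κ) := by
      rw [← hmap2, integral_map hm.aemeasurable
        ((Kernel.measurable_rnDeriv κ η).ennreal_toReal.log.aestronglyMeasurable)]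
    rw [condKL, condKL]
    by_cases hint : Integrable
        (fun q : S × S => Real.log (κ.rnDeriv η q.1 q.2).toReal) ((ρ.map φ) ⊗ₘ κ)
    · rw [if_pos ⟨hACiff.mpr hae, ((hint_iff.mp hint).congr hIeq.symm)⟩, if_pos ⟨hae, hint⟩,
        integral_congr_ae hIeq, hint_eq]
    · rw [if_neg, if_neg (fun h => hint h.2)]
      intro h
      exact hint (hint_iff.mpr ((h.2.congr hIeq)))
  · rw [condKL, condKL, if_neg (fun h => hae (hACiff.mp h.1)), if_neg (fun h => hae h.1)]

end Glue

section Path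

/-- The `snoc` measurable equivalence. -/
def mySnocEquiv (S : Type*) [MeasurableSpace S] (n : ℕ) :
    ((Fin (n + 1) → S) × S) ≃ᵐ (Fin (n + 2) → S) where
  toFun q := Fin.snoc q.1 q.2
  invFun f := (Fin.init f, f (Fin.last (n + 1)))
  left_inv q := by
    refine Prod.ext ?_ ?_
    · simp [Fin.init_snoc]
    · simp
  right_inv f := by simp [Fin.snoc_init_self]
  measurable_toFun := by
    refine measurable_pi_lambda _ fun i => ?_
    refine Fin.lastCases ?_ ?_ i
    · simpa [Fin.snoc_last] using measurable_snd
    · intro j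
      simpa [Fin.snoc_castSucc, Function.comp_def] using (measurable_pi_apply j).comp measurable_fst
  measurable_invFun := by
    refine Measurable.prodMk ?_ (measurable_pi_apply _)
    exact measurable_pi_lambda _ fun j => measurable_pi_apply _

variable {S : Type*} [MeasurableSpace S]

lemma my_snocEquiv_coe (n : ℕ) :
    (⇑(mySnocEquiv S n) : ((Fin (n + 1) → S) × S) → (Fin (n + 2) → S))
      = fun q => Fin.snoc q.1 q.2 := rfl

lemma my_pathMeasure_prob (ν : Measure S) [IsProbabilityMeasure ν] (κ : Kernel S S)
    [IsMarkovKernel κ] : ∀ n, IsProbabilityMeasure (pathMeasure ν κ n)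
  | 0 => by
    rw [pathMeasure]
    exact Measure.isProbabilityMeasure_map
      (measurable_pi_lambda _ fun _ => measurable_id).aemeasurable
  | (n + 1) => by
    haveI := my_pathMeasure_prob ν κ n
    rw [pathMeasure]
    exact Measure.isProbabilityMeasure_map (mySnocEquiv S n).measurable.aemeasurable

lemma my_pathMeasure_map_last (ν : Measure S) [IsProbabilityMeasure ν] (κ : Kernel S S)
    [IsMarkovKernel κ] (hinv : (ν ⊗ₘ κ).snd = ν) :
    ∀ n, (pathMeasure ν κ n).map (fun f => f (Fin.last n)) = ν
  | 0 => by
    have hm : Measurable (fun x : S => (fun _ : Fin (0 + 1) => x)) :=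
      measurable_pi_lambda _ fun _ => measurable_id
    rw [pathMeasure, Measure.map_map (measurable_pi_apply _) hm]
    simp [Function.comp_def]
  | (n + 1) => by
    haveI := my_pathMeasure_prob ν κ n
    have hm2 : Measurable (fun q : (Fin (n + 1) → S) × S => Fin.snoc q.1 q.2
        : ((Fin (n + 1) → S) × S) → (Fin (n + 2) → S)) :=
      (mySnocEquiv S n).measurable
    rw [pathMeasure, Measure.map_map (measurable_pi_apply _) hm2]
    have hcomp : ((fun f : Fin (n + 2) → S => f (Fin.last (n + 1)))
        ∘ (fun q : (Fin (n + 1) → S) × S => Fin.snoc q.1 q.2))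
        = (Prod.snd : ((Fin (n + 1) → S) × S) → S) := by
      funext q
      simp [Function.comp_def]
    rw [hcomp]
    ext s hs
    rw [Measure.map_apply measurable_snd hs, Measure.compProd_apply (measurable_snd hs)]
    have hpt : ∀ ω : Fin (n + 1) → S,
        (κ.comap (fun f : Fin (n + 1) → S => f (Fin.last n)) (measurable_pi_apply _)) ω
          (Prod.mk ω ⁻¹' (Prod.snd ⁻¹' s)) = κ (ω (Fin.last n)) s := by
      intro ω
      rw [Kernel.comap_apply]
      rfl
    simp_rw [hpt]
    rw [← lintegral_map (Kernel.measurable_coe κ hs) (measurable_pi_apply _),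
      my_pathMeasure_map_last ν κ hinv n]
    have h2 : (ν ⊗ₘ κ).snd s = ∫⁻ a, κ a s ∂ν := by
      rw [Measure.snd, Measure.map_apply measurable_snd hs,
        Measure.compProd_apply (measurable_snd hs)]
      rfl
    rw [← h2, hinv]

end Path


/-- if `μ` on `S × S` has equal marginals and `μ = [μ]₁ ⊗ p`, then
for every `N ≥ 1`, the relative entropy of the `N`-step path measures satisfies
`R([μ]₁ ⊗ p ⊗ ⋯ ⊗ p ‖ [μ]₁ ⊗ α ⊗ ⋯ ⊗ α) = N · R([μ]₁ ⊗ p ‖ [μ]₁ ⊗ α)`. -/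
theorem stmt13 {S : Type*} [MeasurableSpace S] [StandardBorelSpace S]
    (μ : Measure (S × S)) [IsProbabilityMeasure μ] (hμ : μ.fst = μ.snd)
    (p α : Kernel S S) [IsMarkovKernel p] [IsMarkovKernel α]
    (hp : μ = μ.fst ⊗ₘ p) (N : ℕ) (hN : 1 ≤ N) :
    relEnt (pathMeasure μ.fst p N) (pathMeasure μ.fst α N)
      = N * relEnt (μ.fst ⊗ₘ p) (μ.fst ⊗ₘ α) := by
  have hinv : (μ.fst ⊗ₘ p).snd = μ.fst := by
    rw [← hp]
    exact hμ.symm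
  have hsame : relEnt (μ.fst ⊗ₘ p) (μ.fst ⊗ₘ α) = condKL μ.fst p α := by
    rw [my_relEnt_compProd, my_relEnt_self, zero_add]
  have key : ∀ n : ℕ, relEnt (pathMeasure μ.fst p n) (pathMeasure μ.fst α n)
      = n * relEnt (μ.fst ⊗ₘ p) (μ.fst ⊗ₘ α) := by
    intro n
    induction n with
    | zero =>
      haveI := my_pathMeasure_prob μ.fst p 0
      haveI := my_pathMeasure_prob μ.fst α 0
      have h0 : pathMeasure μ.fst p 0 = pathMeasure μ.fst α 0 := by
        rw [pathMeasure, pathMeasure]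
      rw [h0, my_relEnt_self]
      simp
    | succ n ih =>
      haveI h1 := my_pathMeasure_prob μ.fst p n
      haveI h2 := my_pathMeasure_prob μ.fst α n
      have hck := my_condKL_comap (pathMeasure μ.fst p n)
        (φ := fun f : Fin (n + 1) → S => f (Fin.last n)) (measurable_pi_apply _) p α
      rw [my_pathMeasure_map_last μ.fst p hinv n] at hck
      rw [pathMeasure, pathMeasure, ← my_snocEquiv_coe n,
        my_relEnt_map_equiv (mySnocEquiv S n), my_relEnt_compProd, ih, hck, ← hsame]
      push_cast
      ring
  exact key N
end
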